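/- Let R be a generalised ray and let p ≥ 0. Then there exist subsets A and B of the coarse sphere S_R^{p+1} with A ∪ B = S_R^{p+1} such that: the decomposition S_R^{p+1} = A ∪ B is coarsely excisive; the subspaces A and B are each coarsely equivalent to the coarse disk D_R^{p+1}; and the subspace A ∩ B is coarsely equivalent to the coarse sphere S_R^p. -/

import Mathlib

open scoped NNReal

namespace CoarsePaper

variable {X Y : Type*}

/-- Composition `M N = {(x,z) | ∃ y, (x,y) ∈ M ∧ (y,z) ∈ N}` of subsets of `X × X`. -/
def Comp (M N : Set (X × X)) : Set (X × X) :=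
  {p | ∃ y, (p.1, y) ∈ M ∧ (y, p.2) ∈ N}

/-- A collection `c` of subsets of `X × X` (the *controlled sets*) is a coarse structure
if it contains the diagonal and is closed under subsets, finite unions, reflection in the
diagonal, and composition. -/
structure IsCoarseStructure (c : Set (Set (X × X))) : Prop where
  diag_mem : Set.diagonal X ∈ c
  subset_mem : ∀ ⦃M N : Set (X × X)⦄, M ∈ c → N ⊆ M → N ∈ c
  union_mem : ∀ ⦃M N : Set (X × X)⦄, M ∈ c → N ∈ c → M ∪ N ∈ c
  swap_mem : ∀ ⦃M : Set (X × X)⦄, M ∈ c → Prod.swap '' M ∈ c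
  comp_mem : ∀ ⦃M N : Set (X × X)⦄, M ∈ c → N ∈ c → Comp M N ∈ c

/-- A set `B ⊆ X` is bounded if `B = M_x = {y | (x,y) ∈ M}` for some controlled `M` and
some point `x`. -/
def IsBounded (c : Set (Set (X × X))) (B : Set X) : Prop :=
  ∃ M ∈ c, ∃ x : X, B = {y | (x, y) ∈ M}

/-- Two maps `f g : S → X` into a coarse space are close if `{(f s, g s) | s ∈ S}` is
controlled. -/
def Close {S : Type*} (c : Set (Set (X × X))) (f g : S → X) : Prop :=
  {p : X × X | ∃ s, p = (f s, g s)} ∈ c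

/-- A map between coarse spaces is a coarse map if images of controlled sets are controlled
and preimages of bounded sets are bounded. -/
def IsCoarseMap (cX : Set (Set (X × X))) (cY : Set (Set (Y × Y))) (f : X → Y) : Prop :=
  (∀ M ∈ cX, (fun p : X × X => (f p.1, f p.2)) '' M ∈ cY) ∧
    ∀ B : Set Y, IsBounded cY B → IsBounded cX (f ⁻¹' B)

/-- A coarse structure on a topological space is compatible with the topology if every
controlled set is contained in an open controlled set and the closure of every bounded set
is compact. -/
def Compatible [TopologicalSpace X] (c : Set (Set (X × X))) : Prop :=
  (∀ M ∈ c, ∃ U ∈ c, IsOpen U ∧ M ⊆ U) ∧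
    ∀ B : Set X, IsBounded c B → IsCompact (closure B)

/-- The coarse structure on the space `[0,∞) = ℝ≥0` making it a generalised ray:
a coarse structure compatible with the topology, closed under sums `M + N`, under the
squeezing operation `Mˢ`, and under translations `a + M`. -/
structure IsGeneralisedRay (c : Set (Set (ℝ≥0 × ℝ≥0))) : Prop where
  coarse : IsCoarseStructure c
  compatible : Compatible c
  sum_mem : ∀ ⦃M N : Set (ℝ≥0 × ℝ≥0)⦄, M ∈ c → N ∈ c →
    {p : ℝ≥0 × ℝ≥0 | ∃ u v x y, (u, v) ∈ M ∧ (x, y) ∈ N ∧ p = (u + x, v + y)} ∈ c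
  squeeze_mem : ∀ ⦃M : Set (ℝ≥0 × ℝ≥0)⦄, M ∈ c →
    {p : ℝ≥0 × ℝ≥0 | ∃ x y, (x, y) ∈ M ∧ x ≤ p.1 ∧ p.1 ≤ y ∧ x ≤ p.2 ∧ p.2 ≤ y} ∈ c
  translate_mem : ∀ (a : ℝ≥0) ⦃M : Set (ℝ≥0 × ℝ≥0)⦄, M ∈ c →
    {p : ℝ≥0 × ℝ≥0 | ∃ x y, (x, y) ∈ M ∧ p = (a + x, a + y)} ∈ c

/-- The bounded coarse structure of a (pseudo)metric space: a set is controlled iff it is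
contained in some neighbourhood of the diagonal `{(x,y) | dist x y < r}`, `r > 0`. -/
def metricC (X : Type*) [PseudoMetricSpace X] : Set (Set (X × X)) :=
  {M | ∃ r : ℝ, 0 < r ∧ M ⊆ {p : X × X | dist p.1 p.2 < r}}

/-- The product coarse structure on `X × Y`: a set is controlled iff it is contained in
`{((u,v),(x,y)) | (u,x) ∈ M₁, (v,y) ∈ M₂}` for controlled `M₁ ⊆ X × X`, `M₂ ⊆ Y × Y`. -/
def prodC (cX : Set (Set (X × X))) (cY : Set (Set (Y × Y))) :
    Set (Set ((X × Y) × (X × Y))) :=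
  {M | ∃ M₁ ∈ cX, ∃ M₂ ∈ cY,
    M ⊆ {p : (X × Y) × (X × Y) | (p.1.1, p.2.1) ∈ M₁ ∧ (p.1.2, p.2.2) ∈ M₂}}

/-- The product coarse structure on a (finite) product `∀ i, Z i`: a set is controlled iff
it is contained in `{(f,g) | ∀ i, (f i, g i) ∈ M i}` for a family of controlled sets. -/
def piC {ι : Type*} {Z : ι → Type*} (c : ∀ i, Set (Set (Z i × Z i))) :
    Set (Set ((∀ i, Z i) × (∀ i, Z i))) :=
  {M | ∃ Mi : ∀ i, Set (Z i × Z i), (∀ i, Mi i ∈ c i) ∧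
    M ⊆ {p : (∀ i, Z i) × (∀ i, Z i) | ∀ i, (p.1 i, p.2 i) ∈ Mi i}}

/-- The subspace coarse structure on `A ⊆ X`: the controlled sets are (identified with)
the controlled sets of `X` contained in `A × A`. -/
def subC (cX : Set (Set (X × X))) (A : Set X) : Set (Set (↥A × ↥A)) :=
  {M : Set (↥A × ↥A) | (fun p : ↥A × ↥A => ((p.1 : X), (p.2 : X))) '' M ∈ cX}

/-- `B` is a finite union of bounded subsets. -/
def IsFinUnionBounded (c : Set (Set (X × X))) (B : Set X) : Prop :=
  ∃ (n : ℕ) (f : Fin n → Set X), (∀ i, IsBounded c (f i)) ∧ B = ⋃ i, f i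

/-- The coarse disjoint union structure on `X ⊕ Y`: a set is controlled iff it is contained
in `M_X ∪ M_Y ∪ (D × D)` where `M_X`, `M_Y` are controlled and `D` is a finite union of
bounded subsets of `X` and of `Y`. -/
def sumC (cX : Set (Set (X × X))) (cY : Set (Set (Y × Y))) :
    Set (Set ((X ⊕ Y) × (X ⊕ Y))) :=
  {M | ∃ MX ∈ cX, ∃ MY ∈ cY, ∃ BX : Set X, ∃ BY : Set Y,
    IsFinUnionBounded cX BX ∧ IsFinUnionBounded cY BY ∧
      M ⊆ (fun p : X × X => ((Sum.inl p.1 : X ⊕ Y), Sum.inl p.2)) '' MX ∪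
          (fun p : Y × Y => ((Sum.inr p.1 : X ⊕ Y), Sum.inr p.2)) '' MY ∪
          (Sum.inl '' BX ∪ Sum.inr '' BY) ×ˢ (Sum.inl '' BX ∪ Sum.inr '' BY)}

/-- A coarse map `f` is a coarse equivalence if there is a coarse map `g` in the opposite
direction with `g ∘ f` and `f ∘ g` close to the respective identity maps. -/
def IsCoarseEquiv (cX : Set (Set (X × X))) (cY : Set (Set (Y × Y))) (f : X → Y) : Prop :=
  IsCoarseMap cX cY f ∧
    ∃ g : Y → X, IsCoarseMap cY cX g ∧
      Close cX (g ∘ f) (id : X → X) ∧ Close cY (f ∘ g) (id : Y → Y)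

/-- Two coarse spaces are coarsely equivalent if there is a coarse equivalence between
them. -/
def CoarselyEquivalent (cX : Set (Set (X × X))) (cY : Set (Set (Y × Y))) : Prop :=
  ∃ f : X → Y, IsCoarseEquiv cX cY f

/-- `m[S] = {y | (x,y) ∈ m for some x ∈ S}`. -/
def img (m : Set (X × X)) (S : Set X) : Set X := {y | ∃ x ∈ S, (x, y) ∈ m}

/-- A decomposition `X = A ∪ B` is coarsely excisive if for every controlled `m` there is
a controlled `M` with `m[A] ∩ m[B] ⊆ M[A ∩ B]`. -/
def IsCoarselyExcisive (c : Set (Set (X × X))) (A B : Set X) : Prop :=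
  A ∪ B = Set.univ ∧ ∀ m ∈ c, ∃ M ∈ c, img m A ∩ img m B ⊆ img M (A ∩ B)

/-- The underlying set `(R ∨ R)ⁿ × R` of the coarse `n`-disk. -/
abbrev DiskT (n : ℕ) : Type := (Fin n → ℝ≥0 ⊕ ℝ≥0) × ℝ≥0

/-- The coarse structure of the coarse `n`-disk `D_R^n = (R ∨ R)ⁿ × R`. -/
def diskC (c : Set (Set (ℝ≥0 × ℝ≥0))) (n : ℕ) : Set (Set (DiskT n × DiskT n)) :=
  prodC (piC fun _ : Fin n => sumC c c) c

/-- The coarse `(n-1)`-sphere `S_R^{n-1} = (R ∨ R)ⁿ × {0}` as a subset of the `n`-disk. -/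
def sphereSet (n : ℕ) : Set (DiskT n) := {q | q.2 = 0}

/-- The coarse structure of the coarse `(n-1)`-sphere `S_R^{n-1}`. -/
def sphereC (c : Set (Set (ℝ≥0 × ℝ≥0))) (n : ℕ) :
    Set (Set (↥(sphereSet n) × ↥(sphereSet n))) :=
  subC (diskC c n) (sphereSet n)

section Helpers

variable {c : Set (Set (ℝ≥0 × ℝ≥0))}

/-- `ee` sends `inl x` and `inr x` to `x`. -/
def ee : ℝ≥0 ⊕ ℝ≥0 → ℝ≥0 := Sum.elim id id

@[simp] lemma ee_inl (x : ℝ≥0) : ee (Sum.inl x) = x := rfl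
@[simp] lemma ee_inr (x : ℝ≥0) : ee (Sum.inr x) = x := rfl

def boxC (a : ℝ≥0) : Set (ℝ≥0 × ℝ≥0) := {p | p.1 ≤ a ∧ p.2 ≤ a}

def Dset (a : ℝ≥0) : Set (ℝ≥0 ⊕ ℝ≥0) := {z | ee z ≤ a}

lemma box_mem (hc : IsGeneralisedRay c) (a : ℝ≥0) : boxC a ∈ c := by
  obtain ⟨U, hU, hUopen, hdiag⟩ := hc.compatible.1 _ hc.coarse.diag_mem
  have h00 : ((0 : ℝ≥0), (0 : ℝ≥0)) ∈ U := hdiag rfl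
  obtain ⟨ε, hε, hball⟩ := Metric.isOpen_iff.1 hUopen _ h00
  set e : ℝ≥0 := Real.toNNReal (ε / 2) with he
  have he_pos : 0 < e := Real.toNNReal_pos.2 (by linarith)
  have heU : ((0 : ℝ≥0), e) ∈ U := by
    apply hball
    simp only [Metric.mem_ball, Prod.dist_eq, dist_self]
    have : dist (e : ℝ≥0) (0 : ℝ≥0) = (e : ℝ) := by
      rw [NNReal.dist_eq]; simp
    rw [this]
    have : (e : ℝ) = ε / 2 := by
      rw [he, Real.coe_toNNReal _ (by positivity)]
    simp [this]
    linarith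
  -- squeeze: [0,e]² is controlled
  have hsq : boxC e ∈ c := by
    have := hc.squeeze_mem hU
    refine hc.coarse.subset_mem this ?_
    rintro ⟨u, v⟩ ⟨h1, h2⟩
    exact ⟨0, e, heU, zero_le, h1, zero_le, h2⟩
  -- boxes [0, n • e]² are controlled
  have hn : ∀ n : ℕ, boxC (n • e) ∈ c := by
    intro n
    induction n with
    | zero =>
      refine hc.coarse.subset_mem hc.coarse.diag_mem ?_
      rintro ⟨u, v⟩ ⟨h1, h2⟩
      simp only [zero_smul, le_zero_iff] at h1 h2
      simp [Set.diagonal, h1, h2]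
    | succ n ih =>
      have := hc.sum_mem ih hsq
      refine hc.coarse.subset_mem this ?_
      rintro ⟨u, v⟩ ⟨h1, h2⟩
      refine ⟨min u (n • e), min v (n • e), u - min u (n • e), v - min v (n • e),
        ⟨min_le_right _ _, min_le_right _ _⟩, ⟨?_, ?_⟩, ?_⟩
      · rcases le_total u (n • e) with h | h
        · rw [min_eq_left h, tsub_self]; exact zero_le
        · rw [min_eq_right h, tsub_le_iff_right]
          rw [succ_nsmul] at h1; rwa [add_comm] at h1
      · rcases le_total v (n • e) with h | h
        · rw [min_eq_left h, tsub_self]; exact zero_le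
        · rw [min_eq_right h, tsub_le_iff_right]
          rw [succ_nsmul] at h2; rwa [add_comm] at h2
      · simp [add_tsub_cancel_of_le (min_le_left u (n • e)),
          add_tsub_cancel_of_le (min_le_left v (n • e))]
  obtain ⟨n, hna⟩ := Archimedean.arch a he_pos
  refine hc.coarse.subset_mem (hn n) ?_
  rintro ⟨u, v⟩ ⟨h1, h2⟩
  exact ⟨h1.trans hna, h2.trans hna⟩

lemma isBounded_iff (hc : IsGeneralisedRay c) {S : Set ℝ≥0} :
    IsBounded c S ↔ ∃ a, ∀ x ∈ S, x ≤ a := by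
  constructor
  · intro hS
    have hcpt := hc.compatible.2 S hS
    have hbdd : BddAbove (closure S) := hcpt.bddAbove
    obtain ⟨a, ha⟩ := hbdd
    exact ⟨a, fun x hx => ha (subset_closure hx)⟩
  · rintro ⟨a, ha⟩
    refine ⟨{p | p.1 = 0 ∧ p.2 ∈ S}, ?_, 0, ?_⟩
    · refine hc.coarse.subset_mem (box_mem hc a) ?_
      rintro ⟨u, v⟩ ⟨h1, h2⟩
      exact ⟨h1 ▸ (zero_le : (0:ℝ≥0) ≤ a), ha _ h2⟩
    · ext y; simp [Set.mem_setOf_eq]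

lemma isFinUnionBounded_iff (hc : IsGeneralisedRay c) {S : Set ℝ≥0} :
    IsFinUnionBounded c S ↔ ∃ a, ∀ x ∈ S, x ≤ a := by
  constructor
  · rintro ⟨n, f, hf, rfl⟩
    choose b hb using fun i => (isBounded_iff hc).1 (hf i)
    refine ⟨Finset.univ.sup b, ?_⟩
    rintro x hx
    obtain ⟨i, hi⟩ := Set.mem_iUnion.1 hx
    exact (hb i x hi).trans (Finset.le_sup (Finset.mem_univ i))
  · rintro h
    refine ⟨1, fun _ => S, fun _ => (isBounded_iff hc).2 h, (Set.iUnion_const S).symm⟩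

end Helpers
section Helpers2

variable {c : Set (Set (ℝ≥0 × ℝ≥0))}

def inlp (M : Set (ℝ≥0 × ℝ≥0)) : Set ((ℝ≥0 ⊕ ℝ≥0) × (ℝ≥0 ⊕ ℝ≥0)) :=
  (fun p : ℝ≥0 × ℝ≥0 => ((Sum.inl p.1 : ℝ≥0 ⊕ ℝ≥0), Sum.inl p.2)) '' M

def inrp (M : Set (ℝ≥0 × ℝ≥0)) : Set ((ℝ≥0 ⊕ ℝ≥0) × (ℝ≥0 ⊕ ℝ≥0)) :=
  (fun p : ℝ≥0 × ℝ≥0 => ((Sum.inr p.1 : ℝ≥0 ⊕ ℝ≥0), Sum.inr p.2)) '' M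

lemma sumC_elim (hc : IsGeneralisedRay c) {M} (hM : M ∈ sumC c c) :
    ∃ MX ∈ c, ∃ MY ∈ c, ∃ a, M ⊆ inlp MX ∪ inrp MY ∪ (Dset a) ×ˢ (Dset a) := by
  obtain ⟨MX, hMX, MY, hMY, BX, BY, hBX, hBY, hsub⟩ := hM
  obtain ⟨aX, haX⟩ := (isFinUnionBounded_iff hc).1 hBX
  obtain ⟨aY, haY⟩ := (isFinUnionBounded_iff hc).1 hBY
  refine ⟨MX, hMX, MY, hMY, max aX aY, hsub.trans ?_⟩
  have hD : Sum.inl '' BX ∪ Sum.inr '' BY ⊆ Dset (max aX aY) := by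
    rintro z (⟨x, hx, rfl⟩ | ⟨y, hy, rfl⟩)
    · exact le_trans (haX x hx) (le_max_left _ _)
    · exact le_trans (haY y hy) (le_max_right _ _)
  exact Set.union_subset_union_right _ (Set.prod_mono hD hD)

lemma Dset_eq (a : ℝ≥0) :
    Dset a = Sum.inl '' {x | x ≤ a} ∪ Sum.inr '' {x | x ≤ a} := by
  ext z
  rcases z with x | x
  · simp [Dset]
  · simp [Dset]

lemma sumC_intro (hc : IsGeneralisedRay c) {M MX MY} (hMX : MX ∈ c) (hMY : MY ∈ c)
    (a : ℝ≥0) (h : M ⊆ inlp MX ∪ inrp MY ∪ (Dset a) ×ˢ (Dset a)) : M ∈ sumC c c := by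
  refine ⟨MX, hMX, MY, hMY, {x | x ≤ a}, {x | x ≤ a}, ?_, ?_, ?_⟩
  · exact (isFinUnionBounded_iff hc).2 ⟨a, fun x hx => hx⟩
  · exact (isFinUnionBounded_iff hc).2 ⟨a, fun x hx => hx⟩
  · rwa [← Dset_eq]

lemma diag_sum_mem (hc : IsGeneralisedRay c) :
    Set.diagonal (ℝ≥0 ⊕ ℝ≥0) ∈ sumC c c := by
  refine sumC_intro hc hc.coarse.diag_mem hc.coarse.diag_mem 0 ?_
  rintro ⟨z, w⟩ hz
  simp only [Set.mem_diagonal_iff] at hz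
  subst hz
  rcases z with x | x
  · exact Or.inl (Or.inl ⟨(x, x), rfl, rfl⟩)
  · exact Or.inl (Or.inr ⟨(x, x), rfl, rfl⟩)

lemma diskC_intro {m : ℕ} {M : Set (DiskT m × DiskT m)}
    (Mi : Fin m → Set ((ℝ≥0 ⊕ ℝ≥0) × (ℝ≥0 ⊕ ℝ≥0))) (M₂ : Set (ℝ≥0 × ℝ≥0))
    (h1 : ∀ i, Mi i ∈ sumC c c) (h2 : M₂ ∈ c)
    (h : ∀ p ∈ M, (∀ i, (p.1.1 i, p.2.1 i) ∈ Mi i) ∧ (p.1.2, p.2.2) ∈ M₂) :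
    M ∈ diskC c m := by
  refine ⟨{q : (Fin m → ℝ≥0 ⊕ ℝ≥0) × (Fin m → ℝ≥0 ⊕ ℝ≥0) | ∀ i, (q.1 i, q.2 i) ∈ Mi i},
    ⟨Mi, h1, fun q hq => hq⟩, M₂, h2, fun p hp => ⟨(h p hp).1, (h p hp).2⟩⟩

lemma diskC_elim {m : ℕ} {M : Set (DiskT m × DiskT m)} (hM : M ∈ diskC c m) :
    ∃ Mi : Fin m → Set ((ℝ≥0 ⊕ ℝ≥0) × (ℝ≥0 ⊕ ℝ≥0)), (∀ i, Mi i ∈ sumC c c) ∧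
      ∃ M₂ ∈ c, ∀ p ∈ M, (∀ i, (p.1.1 i, p.2.1 i) ∈ Mi i) ∧ (p.1.2, p.2.2) ∈ M₂ := by
  obtain ⟨M₁, ⟨Mi, hMi, hM₁⟩, M₂, hM₂, hsub⟩ := hM
  exact ⟨Mi, hMi, M₂, hM₂, fun p hp => ⟨hM₁ (hsub hp).1, (hsub hp).2⟩⟩

lemma diskC_section (hc : IsGeneralisedRay c) {m : ℕ} {M : Set (DiskT m × DiskT m)}
    (hM : M ∈ diskC c m) (q0 : DiskT m) :
    ∃ a, ∀ q, (q0, q) ∈ M → (∀ i, ee (q.1 i) ≤ a) ∧ q.2 ≤ a := by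
  obtain ⟨Mi, hMi, M₂, hM₂, hcond⟩ := diskC_elim hM
  have hsec : ∀ i, ∃ b, ∀ z, (q0.1 i, z) ∈ Mi i → ee z ≤ b := by
    intro i
    obtain ⟨MX, hMX, MY, hMY, ai, hsub⟩ := sumC_elim hc (hMi i)
    obtain ⟨bX, hbX⟩ := (isBounded_iff hc).1 ⟨MX, hMX, ee (q0.1 i), rfl⟩
    obtain ⟨bY, hbY⟩ := (isBounded_iff hc).1 ⟨MY, hMY, ee (q0.1 i), rfl⟩
    refine ⟨max (max bX bY) ai, fun z hz => ?_⟩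
    rcases hsub hz with (⟨⟨u, v⟩, huv, heq⟩ | ⟨⟨u, v⟩, huv, heq⟩) | ⟨_, hz2⟩
    · obtain ⟨h1, h2⟩ := Prod.mk.injEq .. ▸ heq
      have : ee z = v := by rw [← h2]; rfl
      rw [this]
      have : ee (q0.1 i) = u := by rw [← h1]; rfl
      exact le_trans (hbX v (by rwa [this])) (le_trans (le_max_left _ _) (le_max_left _ _))
    · obtain ⟨h1, h2⟩ := Prod.mk.injEq .. ▸ heq
      have : ee z = v := by rw [← h2]; rfl
      rw [this]
      have : ee (q0.1 i) = u := by rw [← h1]; rfl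
      exact le_trans (hbY v (by rwa [this])) (le_trans (le_max_right _ _) (le_max_left _ _))
    · exact le_trans hz2 (le_max_right _ _)
  choose b hb using hsec
  obtain ⟨b₂, hb₂⟩ := (isBounded_iff hc).1 ⟨M₂, hM₂, q0.2, rfl⟩
  refine ⟨max (Finset.univ.sup b) b₂, fun q hq => ?_⟩
  obtain ⟨hco, hray⟩ := hcond _ hq
  constructor
  · intro i
    exact le_trans (hb i _ (hco i))
      (le_trans (Finset.le_sup (Finset.mem_univ i)) (le_max_left _ _))
  · exact le_trans (hb₂ _ hray) (le_max_right _ _)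

lemma diskBounded_iff (hc : IsGeneralisedRay c) {m : ℕ} {S : Set (DiskT m)} :
    IsBounded (diskC c m) S ↔ ∃ a, ∀ q ∈ S, (∀ i, ee (q.1 i) ≤ a) ∧ q.2 ≤ a := by
  constructor
  · rintro ⟨M, hM, q0, rfl⟩
    obtain ⟨a, ha⟩ := diskC_section hc hM q0
    exact ⟨a, fun q hq => ha q hq⟩
  · rintro ⟨a, ha⟩
    refine ⟨{p | p.1 = (fun _ => Sum.inl 0, 0) ∧ p.2 ∈ S}, ?_, (fun _ => Sum.inl 0, 0), ?_⟩
    · refine diskC_intro (fun _ => (Dset a) ×ˢ (Dset a)) (boxC a)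
        (fun _ => sumC_intro hc (hc.coarse.subset_mem hc.coarse.diag_mem (Set.empty_subset _))
          (hc.coarse.subset_mem hc.coarse.diag_mem (Set.empty_subset _)) a ?_)
        (box_mem hc a) ?_
      · intro z hz
        exact Or.inr hz
      · rintro ⟨p1, p2⟩ ⟨rfl, hp2⟩
        refine ⟨fun i => ⟨by simp [Dset], (ha _ hp2).1 i⟩, zero_le, (ha _ hp2).2⟩
    · ext q
      simp only [Set.mem_setOf_eq, true_and]

end Helpers2
section Helpers3

variable {c : Set (Set (ℝ≥0 × ℝ≥0))}

/-- Underlying disk point of a point of a subset of the sphere. -/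
def dd {n : ℕ} {A : Set ↥(sphereSet n)} (x : ↥A) : DiskT n := (x : ↥(sphereSet n))

lemma dd_snd {n : ℕ} {A : Set ↥(sphereSet n)} (x : ↥A) : (dd x).2 = 0 :=
  (x : ↥(sphereSet n)).2

lemma subSphere_mem_iff {n : ℕ} {A : Set ↥(sphereSet n)} {M : Set (↥A × ↥A)} :
    M ∈ subC (sphereC c n) A ↔
      ((fun p : ↥A × ↥A => (dd p.1, dd p.2)) '' M) ∈ diskC c n := by
  show ((fun p : ↥(sphereSet n) × ↥(sphereSet n) => ((p.1 : DiskT n), (p.2 : DiskT n))) ''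
    ((fun p : ↥A × ↥A => ((p.1 : ↥(sphereSet n)), (p.2 : ↥(sphereSet n)))) '' M)) ∈ diskC c n ↔ _
  rw [Set.image_image]
  rfl

lemma subSphere_intro (hc : IsGeneralisedRay c) {n : ℕ} {A : Set ↥(sphereSet n)}
    {M : Set (↥A × ↥A)} (Mi : Fin n → Set ((ℝ≥0 ⊕ ℝ≥0) × (ℝ≥0 ⊕ ℝ≥0)))
    (h1 : ∀ i, Mi i ∈ sumC c c)
    (h : ∀ p ∈ M, ∀ i, ((dd p.1).1 i, (dd p.2).1 i) ∈ Mi i) :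
    M ∈ subC (sphereC c n) A := by
  rw [subSphere_mem_iff]
  refine diskC_intro Mi (Set.diagonal ℝ≥0) h1 hc.coarse.diag_mem ?_
  rintro q ⟨p, hp, rfl⟩
  refine ⟨fun i => h p hp i, ?_⟩
  show (dd p.1).2 = (dd p.2).2
  rw [dd_snd, dd_snd]

lemma subSphere_elim {n : ℕ} {A : Set ↥(sphereSet n)} {M : Set (↥A × ↥A)}
    (hM : M ∈ subC (sphereC c n) A) :
    ∃ Mi : Fin n → Set ((ℝ≥0 ⊕ ℝ≥0) × (ℝ≥0 ⊕ ℝ≥0)), (∀ i, Mi i ∈ sumC c c) ∧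
      ∀ p ∈ M, ∀ i, ((dd p.1).1 i, (dd p.2).1 i) ∈ Mi i := by
  rw [subSphere_mem_iff] at hM
  obtain ⟨Mi, hMi, M₂, hM₂, hcond⟩ := diskC_elim hM
  exact ⟨Mi, hMi, fun p hp i => (hcond _ ⟨p, hp, rfl⟩).1 i⟩

lemma subSphereBounded_iff (hc : IsGeneralisedRay c) {n : ℕ} {A : Set ↥(sphereSet n)}
    (hA : A.Nonempty) {S : Set ↥A} :
    IsBounded (subC (sphereC c n) A) S ↔ ∃ a, ∀ q ∈ S, ∀ i, ee ((dd q).1 i) ≤ a := by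
  constructor
  · rintro ⟨M, hM, x0, rfl⟩
    rw [subSphere_mem_iff] at hM
    obtain ⟨a, ha⟩ := diskC_section hc hM (dd x0)
    refine ⟨a, fun q hq i => ?_⟩
    exact (ha (dd q) ⟨(x0, q), hq, rfl⟩).1 i
  · rintro ⟨a, ha⟩
    obtain ⟨x0', hx0'⟩ := hA
    set x0 : ↥A := ⟨x0', hx0'⟩ with hx0
    set a' := max a (Finset.univ.sup fun i => ee ((dd x0).1 i)) with ha'
    refine ⟨{p | p.1 = x0 ∧ p.2 ∈ S}, ?_, x0, ?_⟩
    · refine subSphere_intro hc (fun _ => (Dset a') ×ˢ (Dset a'))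
        (fun _ => sumC_intro hc
          (hc.coarse.subset_mem hc.coarse.diag_mem (Set.empty_subset _))
          (hc.coarse.subset_mem hc.coarse.diag_mem (Set.empty_subset _)) a'
          (fun z hz => Or.inr hz)) ?_
      rintro ⟨p1, p2⟩ ⟨rfl, hp2⟩ i
      refine ⟨show ee ((dd x0).1 i) ≤ a' from ?_, show ee ((dd p2).1 i) ≤ a' from ?_⟩
      · rw [ha']; exact le_trans (Finset.le_sup (f := fun i => ee ((dd x0).1 i)) (Finset.mem_univ i)) (le_max_right _ _)
      · rw [ha']; exact le_trans (ha _ hp2 i) (le_max_left _ _)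
    · ext q
      simp only [Set.mem_setOf_eq, true_and]

end Helpers3
section Helpers4

variable {c : Set (Set (ℝ≥0 × ℝ≥0))}

lemma sumC_union (hc : IsGeneralisedRay c) {M N : Set ((ℝ≥0 ⊕ ℝ≥0) × (ℝ≥0 ⊕ ℝ≥0))}
    (hM : M ∈ sumC c c) (hN : N ∈ sumC c c) : M ∪ N ∈ sumC c c := by
  obtain ⟨MX, hMX, MY, hMY, a, hsub⟩ := sumC_elim hc hM
  obtain ⟨NX, hNX, NY, hNY, b, hsub'⟩ := sumC_elim hc hN
  refine sumC_intro hc (hc.coarse.union_mem hMX hNX) (hc.coarse.union_mem hMY hNY)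
    (max a b) ?_
  rintro z (hz | hz)
  · rcases hsub hz with (⟨w, hw, rfl⟩ | ⟨w, hw, rfl⟩) | ⟨h1, h2⟩
    · exact Or.inl (Or.inl ⟨w, Or.inl hw, rfl⟩)
    · exact Or.inl (Or.inr ⟨w, Or.inl hw, rfl⟩)
    · exact Or.inr ⟨le_trans (h1 : ee z.1 ≤ a) (le_max_left a b), le_trans (h2 : ee z.2 ≤ a) (le_max_left a b)⟩
  · rcases hsub' hz with (⟨w, hw, rfl⟩ | ⟨w, hw, rfl⟩) | ⟨h1, h2⟩
    · exact Or.inl (Or.inl ⟨w, Or.inr hw, rfl⟩)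
    · exact Or.inl (Or.inr ⟨w, Or.inr hw, rfl⟩)
    · exact Or.inr ⟨le_trans (h1 : ee z.1 ≤ b) (le_max_right a b), le_trans (h2 : ee z.2 ≤ b) (le_max_right a b)⟩

lemma DsetSq_mem (hc : IsGeneralisedRay c) (a : ℝ≥0) :
    (Dset a) ×ˢ (Dset a) ∈ sumC c c :=
  sumC_intro hc (hc.coarse.subset_mem hc.coarse.diag_mem (Set.empty_subset _))
    (hc.coarse.subset_mem hc.coarse.diag_mem (Set.empty_subset _)) a
    (fun _ hz => Or.inr hz)

lemma inlp_mem (hc : IsGeneralisedRay c) {M : Set (ℝ≥0 × ℝ≥0)} (hM : M ∈ c) :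
    inlp M ∈ sumC c c :=
  sumC_intro hc hM (hc.coarse.subset_mem hc.coarse.diag_mem (Set.empty_subset _)) 0
    (fun _ hz => Or.inl (Or.inl hz))

lemma inrp_mem (hc : IsGeneralisedRay c) {M : Set (ℝ≥0 × ℝ≥0)} (hM : M ∈ c) :
    inrp M ∈ sumC c c :=
  sumC_intro hc (hc.coarse.subset_mem hc.coarse.diag_mem (Set.empty_subset _)) hM 0
    (fun _ hz => Or.inl (Or.inr hz))

lemma sphereC_intro (hc : IsGeneralisedRay c) {n : ℕ}
    {M : Set (↥(sphereSet n) × ↥(sphereSet n))}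
    (Mi : Fin n → Set ((ℝ≥0 ⊕ ℝ≥0) × (ℝ≥0 ⊕ ℝ≥0)))
    (h1 : ∀ i, Mi i ∈ sumC c c)
    (h : ∀ p ∈ M, ∀ i, (((p.1 : DiskT n)).1 i, ((p.2 : DiskT n)).1 i) ∈ Mi i) :
    M ∈ sphereC c n := by
  show (fun p : ↥(sphereSet n) × ↥(sphereSet n) => ((p.1 : DiskT n), (p.2 : DiskT n))) '' M
    ∈ diskC c n
  refine diskC_intro Mi (Set.diagonal ℝ≥0) h1 hc.coarse.diag_mem ?_
  rintro q ⟨p, hp, rfl⟩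
  refine ⟨fun i => h p hp i, ?_⟩
  show (p.1 : DiskT n).2 = (p.2 : DiskT n).2
  rw [p.1.2, p.2.2]

lemma sphereC_elim {n : ℕ} {M : Set (↥(sphereSet n) × ↥(sphereSet n))}
    (hM : M ∈ sphereC c n) :
    ∃ Mi : Fin n → Set ((ℝ≥0 ⊕ ℝ≥0) × (ℝ≥0 ⊕ ℝ≥0)), (∀ i, Mi i ∈ sumC c c) ∧
      ∀ p ∈ M, ∀ i, (((p.1 : DiskT n)).1 i, ((p.2 : DiskT n)).1 i) ∈ Mi i := by
  obtain ⟨Mi, hMi, M₂, hM₂, hcond⟩ := diskC_elim hM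
  exact ⟨Mi, hMi, fun p hp i => (hcond _ ⟨p, hp, rfl⟩).1 i⟩

lemma sphereBounded_iff (hc : IsGeneralisedRay c) {n : ℕ} {S : Set ↥(sphereSet n)} :
    IsBounded (sphereC c n) S ↔ ∃ a, ∀ q ∈ S, ∀ i, ee (((q : DiskT n)).1 i) ≤ a := by
  constructor
  · rintro ⟨M, hM, x0, rfl⟩
    obtain ⟨a, ha⟩ := diskC_section hc hM (x0 : DiskT n)
    refine ⟨a, fun q hq i => ?_⟩
    exact (ha (q : DiskT n) ⟨(x0, q), hq, rfl⟩).1 i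
  · rintro ⟨a, ha⟩
    set x0 : ↥(sphereSet n) := ⟨(fun _ => Sum.inl 0, 0), rfl⟩ with hx0
    refine ⟨{p | p.1 = x0 ∧ p.2 ∈ S}, ?_, x0, ?_⟩
    · refine sphereC_intro hc (fun _ => (Dset a) ×ˢ (Dset a))
        (fun _ => DsetSq_mem hc a) ?_
      rintro ⟨p1, p2⟩ ⟨rfl, hp2⟩ i
      refine ⟨show ee (Sum.inl 0) ≤ a from ?_, ha _ hp2 i⟩
      simp
    · ext q
      simp only [Set.mem_setOf_eq, true_and]

lemma diag_sphere_mem (hc : IsGeneralisedRay c) {n : ℕ} :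
    Set.diagonal ↥(sphereSet n) ∈ sphereC c n := by
  refine sphereC_intro hc (fun _ => Set.diagonal (ℝ≥0 ⊕ ℝ≥0))
    (fun _ => diag_sum_mem hc) ?_
  rintro ⟨p1, p2⟩ hp i
  rw [Set.mem_diagonal_iff] at hp
  rw [hp]
  rfl

lemma diag_disk_mem (hc : IsGeneralisedRay c) {n : ℕ} :
    Set.diagonal (DiskT n) ∈ diskC c n := by
  refine diskC_intro (fun _ => Set.diagonal (ℝ≥0 ⊕ ℝ≥0)) (Set.diagonal ℝ≥0)
    (fun _ => diag_sum_mem hc) hc.coarse.diag_mem ?_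
  rintro ⟨p1, p2⟩ hp
  rw [Set.mem_diagonal_iff] at hp
  rw [hp]
  exact ⟨fun i => rfl, rfl⟩

end Helpers4
section Maps

variable {c : Set (Set (ℝ≥0 × ℝ≥0))}

def Aset (n : ℕ) : Set ↥(sphereSet (n + 1)) :=
  {s | ∃ x, ((s : DiskT (n + 1))).1 (Fin.last n) = Sum.inl x}

def Bset (n : ℕ) : Set ↥(sphereSet (n + 1)) :=
  {s | (∃ x, ((s : DiskT (n + 1))).1 (Fin.last n) = Sum.inr x) ∨
    ((s : DiskT (n + 1))).1 (Fin.last n) = Sum.inl 0}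

lemma Aset_nonempty (n : ℕ) : (Aset n).Nonempty :=
  ⟨⟨(fun _ => Sum.inl 0, 0), rfl⟩, ⟨0, rfl⟩⟩

lemma Bset_nonempty (n : ℕ) : (Bset n).Nonempty :=
  ⟨⟨(fun _ => Sum.inl 0, 0), rfl⟩, Or.inr rfl⟩

lemma ABset_nonempty (n : ℕ) : (Aset n ∩ Bset n).Nonempty :=
  ⟨⟨(fun _ => Sum.inl 0, 0), rfl⟩, ⟨0, rfl⟩, Or.inr rfl⟩

lemma lastI {n : ℕ} (s : ↥(Aset n ∩ Bset n)) :
    (dd s).1 (Fin.last n) = Sum.inl 0 := by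
  obtain ⟨⟨x, hx⟩, hB⟩ := s.2
  rcases hB with ⟨y, hy⟩ | h
  · rw [hx] at hy; exact absurd hy (by simp)
  · exact h

def fA {n : ℕ} : ↥(Aset n) → DiskT n :=
  fun s => (Fin.init (dd s).1, ee ((dd s).1 (Fin.last n)))

def gA {n : ℕ} : DiskT n → ↥(Aset n) :=
  fun q => ⟨⟨(Fin.snoc q.1 (Sum.inl q.2), 0), rfl⟩,
    ⟨q.2, by simp⟩⟩

def fB {n : ℕ} : ↥(Bset n) → DiskT n :=
  fun s => (Fin.init (dd s).1, ee ((dd s).1 (Fin.last n)))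

def gB {n : ℕ} : DiskT n → ↥(Bset n) :=
  fun q => ⟨⟨(Fin.snoc q.1 (Sum.inr q.2), 0), rfl⟩,
    Or.inl ⟨q.2, by simp⟩⟩

def fI {n : ℕ} : ↥(Aset n ∩ Bset n) → ↥(sphereSet n) :=
  fun s => ⟨(Fin.init (dd s).1, 0), rfl⟩

def gI {n : ℕ} : ↥(sphereSet n) → ↥(Aset n ∩ Bset n) :=
  fun t => ⟨⟨(Fin.snoc (t : DiskT n).1 (Sum.inl 0), 0), rfl⟩,
    ⟨0, by simp⟩,
    Or.inr (by simp)⟩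

lemma gA_fA {n : ℕ} (s : ↥(Aset n)) : gA (fA s) = s := by
  obtain ⟨x, hx⟩ := s.2
  apply Subtype.ext
  apply Subtype.ext
  show ((Fin.snoc (fA s).1 (Sum.inl (fA s).2), 0) : DiskT (n + 1)) = dd s
  have h1 : (fA s).1 = Fin.init (dd s).1 := rfl
  have h2 : (fA s).2 = ee ((dd s).1 (Fin.last n)) := rfl
  have hx' : (dd s).1 (Fin.last n) = Sum.inl x := hx
  rw [h1, h2, hx', ee_inl, ← hx', Fin.snoc_init_self]
  exact Prod.ext rfl (dd_snd s).symm

lemma fA_gA {n : ℕ} (q : DiskT n) : fA (gA q) = q := by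
  show (Fin.init (Fin.snoc q.1 (Sum.inl q.2) : Fin (n+1) → ℝ≥0 ⊕ ℝ≥0),
    ee ((Fin.snoc q.1 (Sum.inl q.2) : Fin (n+1) → ℝ≥0 ⊕ ℝ≥0) (Fin.last n))) = q
  rw [Fin.init_snoc, Fin.snoc_last, ee_inl]

lemma fB_gB {n : ℕ} (q : DiskT n) : fB (gB q) = q := by
  show (Fin.init (Fin.snoc q.1 (Sum.inr q.2) : Fin (n+1) → ℝ≥0 ⊕ ℝ≥0),
    ee ((Fin.snoc q.1 (Sum.inr q.2) : Fin (n+1) → ℝ≥0 ⊕ ℝ≥0) (Fin.last n))) = q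
  rw [Fin.init_snoc, Fin.snoc_last, ee_inr]

lemma gI_fI {n : ℕ} (s : ↥(Aset n ∩ Bset n)) : gI (fI s) = s := by
  apply Subtype.ext
  apply Subtype.ext
  show ((Fin.snoc (fI s : DiskT n).1 (Sum.inl 0), 0) : DiskT (n + 1)) = dd s
  have h1 : (fI s : DiskT n).1 = Fin.init (dd s).1 := rfl
  rw [h1, ← lastI s, Fin.snoc_init_self]
  exact Prod.ext rfl (dd_snd s).symm

lemma fI_gI {n : ℕ} (t : ↥(sphereSet n)) : fI (gI t) = t := by
  apply Subtype.ext
  show ((Fin.init (dd (gI t)).1, 0) : DiskT n) = (t : DiskT n)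
  have h1 : (dd (gI t)).1 = Fin.snoc (t : DiskT n).1 (Sum.inl 0) := rfl
  rw [h1, Fin.init_snoc]
  exact Prod.ext rfl t.2.symm

end Maps
section Mono

variable {c : Set (Set (ℝ≥0 × ℝ≥0))}

lemma diskC_mono {m : ℕ} {M N : Set (DiskT m × DiskT m)} (hM : M ∈ diskC c m)
    (h : N ⊆ M) : N ∈ diskC c m := by
  obtain ⟨M₁, h₁, M₂, h₂, hs⟩ := hM
  exact ⟨M₁, h₁, M₂, h₂, h.trans hs⟩

lemma sphereC_mono {n : ℕ} {M N : Set (↥(sphereSet n) × ↥(sphereSet n))}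
    (hM : M ∈ sphereC c n) (h : N ⊆ M) : N ∈ sphereC c n :=
  diskC_mono hM (Set.image_mono h)

lemma subSphere_mono {n : ℕ} {A : Set ↥(sphereSet n)} {M N : Set (↥A × ↥A)}
    (hM : M ∈ subC (sphereC c n) A) (h : N ⊆ M) : N ∈ subC (sphereC c n) A := by
  rw [subSphere_mem_iff] at hM ⊢
  exact diskC_mono hM (Set.image_mono h)

lemma diag_subSphere_mem (hc : IsGeneralisedRay c) {n : ℕ} {A : Set ↥(sphereSet n)} :
    Set.diagonal ↥A ∈ subC (sphereC c n) A := by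
  refine subSphere_intro hc (fun _ => Set.diagonal (ℝ≥0 ⊕ ℝ≥0))
    (fun _ => diag_sum_mem hc) ?_
  rintro ⟨p1, p2⟩ hp i
  rw [Set.mem_diagonal_iff] at hp
  rw [hp]
  rfl

lemma eqI (hc : IsGeneralisedRay c) (n : ℕ) :
    CoarselyEquivalent (subC (sphereC c (n + 1)) (Aset n ∩ Bset n)) (sphereC c n) := by
  refine ⟨fI, ⟨?_, ?_⟩, gI, ⟨?_, ?_⟩, ?_, ?_⟩
  · -- images under fI
    intro M hM
    obtain ⟨Mi, hMi, hcond⟩ := subSphere_elim hM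
    refine sphereC_intro hc (fun j => Mi (Fin.castSucc j)) (fun j => hMi _) ?_
    rintro q ⟨p, hp, rfl⟩ j
    exact hcond p hp (Fin.castSucc j)
  · -- preimages of bounded under fI
    intro Bd hBd
    rw [sphereBounded_iff hc] at hBd
    obtain ⟨a, ha⟩ := hBd
    rw [subSphereBounded_iff hc (ABset_nonempty n)]
    refine ⟨a, fun q hq i => ?_⟩
    induction i using Fin.lastCases with
    | last =>
      have h : (dd q).1 (Fin.last n) = Sum.inl 0 := lastI q
      rw [h, ee_inl]
      exact (zero_le : (0:ℝ≥0) ≤ a)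
    | cast j => exact ha _ hq j
  · -- images under gI
    intro N hN
    obtain ⟨Ni, hNi, hcond⟩ := sphereC_elim hN
    refine subSphere_intro hc (Fin.snoc Ni (Set.diagonal (ℝ≥0 ⊕ ℝ≥0))) ?_ ?_
    · intro i
      induction i using Fin.lastCases with
      | last => rw [Fin.snoc_last]; exact diag_sum_mem hc
      | cast j => rw [Fin.snoc_castSucc]; exact hNi j
    · rintro p ⟨t, ht, rfl⟩ i
      have e1 : (dd (gI t.1)).1 = Fin.snoc (t.1 : DiskT n).1 (Sum.inl 0) := rfl
      have e2 : (dd (gI t.2)).1 = Fin.snoc (t.2 : DiskT n).1 (Sum.inl 0) := rfl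
      rw [e1, e2]
      induction i using Fin.lastCases with
      | last =>
        rw [Fin.snoc_last, Fin.snoc_last, Fin.snoc_last]
        rfl
      | cast j =>
        rw [Fin.snoc_castSucc, Fin.snoc_castSucc, Fin.snoc_castSucc]
        exact hcond t ht j
  · -- preimages of bounded under gI
    intro Bd hBd
    rw [subSphereBounded_iff hc (ABset_nonempty n)] at hBd
    obtain ⟨a, ha⟩ := hBd
    rw [sphereBounded_iff hc]
    refine ⟨a, fun t ht j => ?_⟩
    have h := ha _ ht (Fin.castSucc j)
    rwa [show (dd (gI t)).1 = Fin.snoc (t : DiskT n).1 (Sum.inl 0) from rfl,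
      Fin.snoc_castSucc] at h
  · -- gI ∘ fI close to id
    refine subSphere_mono (diag_subSphere_mem hc) ?_
    rintro q ⟨s, rfl⟩
    show (gI ∘ fI) s = id s
    simp [gI_fI s]
  · -- fI ∘ gI close to id
    refine sphereC_mono (diag_sphere_mem hc) ?_
    rintro q ⟨t, rfl⟩
    show (fI ∘ gI) t = id t
    simp [fI_gI t]

end Mono
section EqA

variable {c : Set (Set (ℝ≥0 × ℝ≥0))}

lemma eqA (hc : IsGeneralisedRay c) (n : ℕ) :
    CoarselyEquivalent (subC (sphereC c (n + 1)) (Aset n)) (diskC c n) := by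
  refine ⟨fA, ⟨?_, ?_⟩, gA, ⟨?_, ?_⟩, ?_, ?_⟩
  · -- images under fA
    intro M hM
    obtain ⟨Mi, hMi, hcond⟩ := subSphere_elim hM
    obtain ⟨MX, hMX, MY, hMY, a, hsub⟩ := sumC_elim hc (hMi (Fin.last n))
    refine diskC_intro (fun j => Mi (Fin.castSucc j)) (MX ∪ (MY ∪ boxC a))
      (fun j => hMi _)
      (hc.coarse.union_mem hMX (hc.coarse.union_mem hMY (box_mem hc a))) ?_
    rintro q ⟨p, hp, rfl⟩
    refine ⟨fun j => hcond p hp (Fin.castSucc j), ?_⟩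
    have h := hcond p hp (Fin.last n)
    show (ee ((dd p.1).1 (Fin.last n)), ee ((dd p.2).1 (Fin.last n))) ∈ MX ∪ (MY ∪ boxC a)
    rcases hsub h with (⟨w, hw, hweq⟩ | ⟨w, hw, hweq⟩) | ⟨h1, h2⟩
    · obtain ⟨e1, e2⟩ := Prod.mk.injEq .. ▸ hweq
      rw [← e1, ← e2, ee_inl, ee_inl]
      exact Or.inl hw
    · obtain ⟨e1, e2⟩ := Prod.mk.injEq .. ▸ hweq
      rw [← e1, ← e2, ee_inr, ee_inr]
      exact Or.inr (Or.inl hw)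
    · exact Or.inr (Or.inr ⟨h1, h2⟩)
  · -- preimages of bounded under fA
    intro Bd hBd
    rw [diskBounded_iff hc] at hBd
    obtain ⟨a, ha⟩ := hBd
    rw [subSphereBounded_iff hc (Aset_nonempty n)]
    refine ⟨a, fun q hq i => ?_⟩
    induction i using Fin.lastCases with
    | last => exact (ha _ hq).2
    | cast j => exact (ha _ hq).1 j
  · -- images under gA
    intro N hN
    obtain ⟨Ni, hNi, N₂, hN₂, hcond⟩ := diskC_elim hN
    refine subSphere_intro hc (Fin.snoc Ni (inlp N₂)) ?_ ?_
    · intro i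
      induction i using Fin.lastCases with
      | last => rw [Fin.snoc_last]; exact inlp_mem hc hN₂
      | cast j => rw [Fin.snoc_castSucc]; exact hNi j
    · rintro p ⟨t, ht, rfl⟩ i
      have e1 : (dd (gA t.1)).1 = Fin.snoc t.1.1 (Sum.inl t.1.2) := rfl
      have e2 : (dd (gA t.2)).1 = Fin.snoc t.2.1 (Sum.inl t.2.2) := rfl
      rw [e1, e2]
      induction i using Fin.lastCases with
      | last =>
        rw [Fin.snoc_last, Fin.snoc_last, Fin.snoc_last]
        exact ⟨(t.1.2, t.2.2), (hcond t ht).2, rfl⟩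
      | cast j =>
        rw [Fin.snoc_castSucc, Fin.snoc_castSucc, Fin.snoc_castSucc]
        exact (hcond t ht).1 j
  · -- preimages of bounded under gA
    intro Bd hBd
    rw [subSphereBounded_iff hc (Aset_nonempty n)] at hBd
    obtain ⟨a, ha⟩ := hBd
    rw [diskBounded_iff hc]
    refine ⟨a, fun q hq => ⟨fun j => ?_, ?_⟩⟩
    · have h := ha _ hq (Fin.castSucc j)
      rwa [show (dd (gA q)).1 = Fin.snoc q.1 (Sum.inl q.2) from rfl,
        Fin.snoc_castSucc] at h
    · have h := ha _ hq (Fin.last n)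
      rwa [show (dd (gA q)).1 = Fin.snoc q.1 (Sum.inl q.2) from rfl,
        Fin.snoc_last, ee_inl] at h
  · -- gA ∘ fA close to id
    refine subSphere_mono (diag_subSphere_mem hc) ?_
    rintro q ⟨s, rfl⟩
    show (gA ∘ fA) s = id s
    simp [gA_fA s]
  · -- fA ∘ gA close to id
    refine diskC_mono (diag_disk_mem hc) ?_
    rintro q ⟨t, rfl⟩
    show (fA ∘ gA) t = id t
    simp [fA_gA t]

end EqA
section EqB

variable {c : Set (Set (ℝ≥0 × ℝ≥0))}

lemma eqB (hc : IsGeneralisedRay c) (n : ℕ) :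
    CoarselyEquivalent (subC (sphereC c (n + 1)) (Bset n)) (diskC c n) := by
  refine ⟨fB, ⟨?_, ?_⟩, gB, ⟨?_, ?_⟩, ?_, ?_⟩
  · -- images under fB
    intro M hM
    obtain ⟨Mi, hMi, hcond⟩ := subSphere_elim hM
    obtain ⟨MX, hMX, MY, hMY, a, hsub⟩ := sumC_elim hc (hMi (Fin.last n))
    refine diskC_intro (fun j => Mi (Fin.castSucc j)) (MX ∪ (MY ∪ boxC a))
      (fun j => hMi _)
      (hc.coarse.union_mem hMX (hc.coarse.union_mem hMY (box_mem hc a))) ?_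
    rintro q ⟨p, hp, rfl⟩
    refine ⟨fun j => hcond p hp (Fin.castSucc j), ?_⟩
    have h := hcond p hp (Fin.last n)
    show (ee ((dd p.1).1 (Fin.last n)), ee ((dd p.2).1 (Fin.last n))) ∈ MX ∪ (MY ∪ boxC a)
    rcases hsub h with (⟨w, hw, hweq⟩ | ⟨w, hw, hweq⟩) | ⟨h1, h2⟩
    · obtain ⟨e1, e2⟩ := Prod.mk.injEq .. ▸ hweq
      rw [← e1, ← e2, ee_inl, ee_inl]
      exact Or.inl hw
    · obtain ⟨e1, e2⟩ := Prod.mk.injEq .. ▸ hweq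
      rw [← e1, ← e2, ee_inr, ee_inr]
      exact Or.inr (Or.inl hw)
    · exact Or.inr (Or.inr ⟨h1, h2⟩)
  · -- preimages of bounded under fB
    intro Bd hBd
    rw [diskBounded_iff hc] at hBd
    obtain ⟨a, ha⟩ := hBd
    rw [subSphereBounded_iff hc (Bset_nonempty n)]
    refine ⟨a, fun q hq i => ?_⟩
    induction i using Fin.lastCases with
    | last => exact (ha _ hq).2
    | cast j => exact (ha _ hq).1 j
  · -- images under gB
    intro N hN
    obtain ⟨Ni, hNi, N₂, hN₂, hcond⟩ := diskC_elim hN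
    refine subSphere_intro hc (Fin.snoc Ni (inrp N₂)) ?_ ?_
    · intro i
      induction i using Fin.lastCases with
      | last => rw [Fin.snoc_last]; exact inrp_mem hc hN₂
      | cast j => rw [Fin.snoc_castSucc]; exact hNi j
    · rintro p ⟨t, ht, rfl⟩ i
      have e1 : (dd (gB t.1)).1 = Fin.snoc t.1.1 (Sum.inr t.1.2) := rfl
      have e2 : (dd (gB t.2)).1 = Fin.snoc t.2.1 (Sum.inr t.2.2) := rfl
      rw [e1, e2]
      induction i using Fin.lastCases with
      | last =>
        rw [Fin.snoc_last, Fin.snoc_last, Fin.snoc_last]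
        exact ⟨(t.1.2, t.2.2), (hcond t ht).2, rfl⟩
      | cast j =>
        rw [Fin.snoc_castSucc, Fin.snoc_castSucc, Fin.snoc_castSucc]
        exact (hcond t ht).1 j
  · -- preimages of bounded under gB
    intro Bd hBd
    rw [subSphereBounded_iff hc (Bset_nonempty n)] at hBd
    obtain ⟨a, ha⟩ := hBd
    rw [diskBounded_iff hc]
    refine ⟨a, fun q hq => ⟨fun j => ?_, ?_⟩⟩
    · have h := ha _ hq (Fin.castSucc j)
      rwa [show (dd (gB q)).1 = Fin.snoc q.1 (Sum.inr q.2) from rfl,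
        Fin.snoc_castSucc] at h
    · have h := ha _ hq (Fin.last n)
      rwa [show (dd (gB q)).1 = Fin.snoc q.1 (Sum.inr q.2) from rfl,
        Fin.snoc_last, ee_inr] at h
  · -- gB ∘ fB close to id
    refine subSphere_intro hc
      (Fin.snoc (fun _ => Set.diagonal (ℝ≥0 ⊕ ℝ≥0))
        (Set.diagonal (ℝ≥0 ⊕ ℝ≥0) ∪ (Dset 0) ×ˢ (Dset 0))) ?_ ?_
    · intro i
      induction i using Fin.lastCases with
      | last =>
        rw [Fin.snoc_last]
        exact sumC_union hc (diag_sum_mem hc) (DsetSq_mem hc 0)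
      | cast j => rw [Fin.snoc_castSucc]; exact diag_sum_mem hc
    · rintro q ⟨s, rfl⟩ i
      have e1 : (dd ((gB ∘ fB) s)).1 =
          Fin.snoc (Fin.init (dd s).1) (Sum.inr (ee ((dd s).1 (Fin.last n)))) := rfl
      show ((dd ((gB ∘ fB) s)).1 i, (dd (id s)).1 i) ∈ _
      rw [e1]
      induction i using Fin.lastCases with
      | last =>
        rw [Fin.snoc_last, Fin.snoc_last]
        have e2 : dd (id s) = dd s := rfl
        rw [e2]
        rcases s.2 with ⟨x, hx⟩ | hx
        · have hx' : (dd s).1 (Fin.last n) = Sum.inr x := hx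
          rw [hx', ee_inr]
          exact Or.inl rfl
        · have hx' : (dd s).1 (Fin.last n) = Sum.inl 0 := hx
          rw [hx', ee_inl]
          exact Or.inr ⟨show ee (Sum.inr (0:ℝ≥0)) ≤ 0 from le_refl 0,
            show ee (Sum.inl (0:ℝ≥0)) ≤ 0 from le_refl 0⟩
      | cast j =>
        rw [Fin.snoc_castSucc, Fin.snoc_castSucc]
        rfl
  ·
    refine diskC_mono (diag_disk_mem hc) ?_
    rintro q ⟨t, rfl⟩
    show (fB ∘ gB) t = id t
    simp [fB_gB t]

end EqB
section Exc

variable {c : Set (Set (ℝ≥0 × ℝ≥0))}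

lemma exc (hc : IsGeneralisedRay c) (n : ℕ) :
    IsCoarselyExcisive (sphereC c (n + 1)) (Aset n) (Bset n) := by
  constructor
  · ext s
    simp only [Set.mem_union, Set.mem_univ, iff_true]
    rcases h : (s : DiskT (n + 1)).1 (Fin.last n) with x | x
    · exact Or.inl ⟨x, h⟩
    · exact Or.inr (Or.inl ⟨x, h⟩)
  · intro m hm
    obtain ⟨Mi, hMi, hcond⟩ := sphereC_elim hm
    obtain ⟨MX, hMX, MY, hMY, a, hsub⟩ := sumC_elim hc (hMi (Fin.last n))
    refine ⟨{p : ↥(sphereSet (n + 1)) × ↥(sphereSet (n + 1)) |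
      ∀ i, ((p.1 : DiskT (n + 1)).1 i, (p.2 : DiskT (n + 1)).1 i) ∈
        Mi i ∪ (Dset a) ×ˢ (Dset a)}, ?_, ?_⟩
    · exact sphereC_intro hc (fun i => Mi i ∪ (Dset a) ×ˢ (Dset a))
        (fun i => sumC_union hc (hMi i) (DsetSq_mem hc a)) (fun p hp i => hp i)
    · rintro y ⟨⟨a0, ha0A, ha0m⟩, ⟨b0, hb0B, hb0m⟩⟩
      set z : ↥(sphereSet (n + 1)) :=
        ⟨(Fin.snoc (Fin.init ((a0 : DiskT (n + 1)).1)) (Sum.inl 0), 0), rfl⟩ with hzdef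
      have hz1 : (z : DiskT (n + 1)).1 =
          Fin.snoc (Fin.init ((a0 : DiskT (n + 1)).1)) (Sum.inl 0) := rfl
      have hzlast : (z : DiskT (n + 1)).1 (Fin.last n) = Sum.inl 0 := by
        rw [hz1, Fin.snoc_last]
      refine ⟨z, ⟨⟨0, hzlast⟩, Or.inr hzlast⟩, ?_⟩
      intro i
      induction i using Fin.lastCases with
      | last =>
        rw [hzlast]
        have hay := hcond (a0, y) ha0m (Fin.last n)
        obtain ⟨u0, hu0⟩ := ha0A
        rw [hu0] at hay
        rcases hb0B with ⟨x, hx⟩ | hx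
        · -- b0 ends in inr x
          rcases hsub hay with (⟨w, hw, hweq⟩ | ⟨w, hw, hweq⟩) | ⟨h1, h2⟩
          · -- y ends in inl w.2 : use the b0 relation
            obtain ⟨e1, e2⟩ := Prod.mk.injEq .. ▸ hweq
            have hby := hcond (b0, y) hb0m (Fin.last n)
            rw [hx] at hby
            rcases hsub hby with (⟨w', hw', hweq'⟩ | ⟨w', hw', hweq'⟩) | ⟨h1', h2'⟩
            · obtain ⟨e1', e2'⟩ := Prod.mk.injEq .. ▸ hweq'
              exact absurd e1' (by simp)
            · obtain ⟨e1', e2'⟩ := Prod.mk.injEq .. ▸ hweq'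
              rw [← e2] at e2'
              exact absurd e2' (by simp)
            · exact Or.inr ⟨show ee (Sum.inl (0:ℝ≥0)) ≤ a from (zero_le : (0:ℝ≥0) ≤ a), h2'⟩
          · -- a0 relation lands in inrp : impossible since a0 ends in inl
            obtain ⟨e1, e2⟩ := Prod.mk.injEq .. ▸ hweq
            exact absurd e1 (by simp)
          · exact Or.inr ⟨show ee (Sum.inl (0:ℝ≥0)) ≤ a from (zero_le : (0:ℝ≥0) ≤ a), h2⟩
        · -- b0 ends in inl 0
          have hby := hcond (b0, y) hb0m (Fin.last n)
          rw [hx] at hby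
          exact Or.inl hby
      | cast j =>
        rw [hz1, Fin.snoc_castSucc]
        exact Or.inl (hcond (a0, y) ha0m (Fin.castSucc j))

end Exc
/-- For a generalised ray `R` and `p ≥ 0`, there are subsets `A` and `B`
of the coarse sphere `S_R^{p+1} = (R ∨ R)^{p+2} × {0}` with `A ∪ B = S_R^{p+1}` such that
the decomposition is coarsely excisive, `A` and `B` are each coarsely equivalent to the
coarse disk `D_R^{p+1}`, and `A ∩ B` is coarsely equivalent to the sphere `S_R^p`. -/
theorem sphere_excisive_decomposition
    (c : Set (Set (ℝ≥0 × ℝ≥0))) (hc : IsGeneralisedRay c) (p : ℕ) :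
    ∃ A B : Set ↥(sphereSet (p + 2)),
      IsCoarselyExcisive (sphereC c (p + 2)) A B ∧
        CoarselyEquivalent (subC (sphereC c (p + 2)) A) (diskC c (p + 1)) ∧
        CoarselyEquivalent (subC (sphereC c (p + 2)) B) (diskC c (p + 1)) ∧
        CoarselyEquivalent (subC (sphereC c (p + 2)) (A ∩ B)) (sphereC c (p + 1)) := by
  exact ⟨Aset (p + 1), Bset (p + 1), exc hc (p + 1), eqA hc (p + 1), eqB hc (p + 1),
    eqI hc (p + 1)⟩

end CoarsePaper
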